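/- Fix F > 0 with F² > 1. Let w : ℝ × [0,1] → ℝ be continuous and bounded, harmonic on the open half-strip ℝ × (0,1), such that ∂_η w extends continuously to the top boundary {η = 1}. Suppose w(ξ,0) = 0 for all ξ ∈ ℝ, ∂_η w(ξ,1) = w(ξ,1)/F² for all ξ ∈ ℝ, and w(ξ,η) → 0 as |ξ| → ∞, uniformly in η ∈ [0,1]. Then w ≡ 0. -/

import Mathlib

open Set

/-- Partial derivative in the first (horizontal) variable. -/
noncomputable def pdx (w : ℝ × ℝ → ℝ) : ℝ × ℝ → ℝ :=
  fun p => deriv (fun x => w (x, p.2)) p.1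

/-- Partial derivative in the second (vertical) variable. -/
noncomputable def pdy (w : ℝ × ℝ → ℝ) : ℝ × ℝ → ℝ :=
  fun p => deriv (fun y => w (p.1, y)) p.2

/-- `w` is harmonic on the set `s ⊆ ℝ²`: it is `C²` there and satisfies Laplace's equation. -/
def HarmonicOnR2 (w : ℝ × ℝ → ℝ) (s : Set (ℝ × ℝ)) : Prop :=
  ContDiffOn ℝ 2 w s ∧ ∀ p ∈ s, pdx (pdx w) p + pdy (pdy w) p = 0

open Filter Topology


/-- Horizontal slice of a `C²` function on the open strip is `C²` on `ℝ`. -/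
lemma slice_h {w : ℝ × ℝ → ℝ} (hw : ContDiffOn ℝ 2 w ((univ : Set ℝ) ×ˢ Ioo (0:ℝ) 1))
    {y0 : ℝ} (hy0 : y0 ∈ Ioo (0:ℝ) 1) : ContDiff ℝ 2 (fun x => w (x, y0)) := by
  rw [← contDiffOn_univ]
  exact hw.comp ((contDiff_id.prodMk contDiff_const).contDiffOn)
    (fun x _ => ⟨mem_univ _, hy0⟩)

/-- Vertical slice of a `C²` function on the open strip is `C²` on `(0,1)`. -/
lemma slice_v {w : ℝ × ℝ → ℝ} (hw : ContDiffOn ℝ 2 w ((univ : Set ℝ) ×ˢ Ioo (0:ℝ) 1))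
    (x0 : ℝ) : ContDiffOn ℝ 2 (fun y => w (x0, y)) (Ioo (0:ℝ) 1) :=
  hw.comp ((contDiff_const.prodMk contDiff_id).contDiffOn)
    (fun y hy => ⟨mem_univ _, hy⟩)

lemma pdx_slice (w : ℝ × ℝ → ℝ) (y0 : ℝ) :
    (fun x => pdx w (x, y0)) = deriv (fun x => w (x, y0)) := rfl

lemma pdxx_eq (w : ℝ × ℝ → ℝ) (p : ℝ × ℝ) :
    pdx (pdx w) p = deriv (deriv (fun x => w (x, p.2))) p.1 := rfl

lemma pdy_slice (w : ℝ × ℝ → ℝ) (x0 : ℝ) :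
    (fun y => pdy w (x0, y)) = deriv (fun y => w (x0, y)) := rfl

lemma pdyy_eq (w : ℝ × ℝ → ℝ) (p : ℝ × ℝ) :
    pdy (pdy w) p = deriv (deriv (fun y => w (p.1, y))) p.2 := rfl

/-- Second derivative test: at an interior local max of a `C²` function, `f'' ≤ 0`. -/
lemma sd_test {f : ℝ → ℝ} {U : Set ℝ} (hU : IsOpen U) (hf : ContDiffOn ℝ 2 f U)
    {a : ℝ} (ha : a ∈ U) (hmax : IsLocalMax f a) : deriv (deriv f) a ≤ 0 := by
  by_contra h
  push_neg at h
  have hf' : ContDiffOn ℝ 1 (deriv f) U :=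
    hf.deriv_of_isOpen hU (by norm_num)
  have hd0 : deriv f a = 0 := hmax.deriv_eq_zero
  have hdiff : DifferentiableAt ℝ (deriv f) a :=
    (hf'.contDiffAt (hU.mem_nhds ha)).differentiableAt one_ne_zero
  have hslope : Tendsto (slope (deriv f) a) (𝓝[≠] a) (𝓝 (deriv (deriv f) a)) :=
    hasDerivAt_iff_tendsto_slope.1 hdiff.hasDerivAt
  have hpos : ∀ᶠ x in 𝓝[>] a, 0 < deriv f x := by
    have h1 : ∀ᶠ x in 𝓝[>] a, 0 < slope (deriv f) a x :=
      (hslope.mono_left (nhdsWithin_mono a fun x hx => ne_of_gt hx)).eventually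
        (eventually_gt_nhds h)
    filter_upwards [h1, self_mem_nhdsWithin] with x hx hx'
    have hq : 0 < (deriv f x - deriv f a) / (x - a) := by
      simpa [slope_def_field, div_eq_iff, hd0] using hx
    have hxa : 0 < x - a := sub_pos.2 hx'
    rcases div_pos_iff.1 hq with ⟨h3, h4⟩ | ⟨h3, h4⟩ <;> linarith
  -- a neighborhood where also f ≤ f a and inside U
  have hU' : ∀ᶠ x in 𝓝[>] a, f x ≤ f a ∧ x ∈ U :=
    (hmax.and (hU.mem_nhds ha)).filter_mono nhdsWithin_le_nhds
  obtain ⟨b, hb, hIoc⟩ := mem_nhdsGT_iff_exists_Ioc_subset.1 (hpos.and hU')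
  have hab : a < b := hb
  have hsub : Icc a b ⊆ U := by
    intro x hx
    rcases eq_or_lt_of_le hx.1 with rfl | hlt
    · exact ha
    · exact (hIoc ⟨hlt, hx.2⟩).2.2
  have hmono : StrictMonoOn f (Icc a b) := by
    apply strictMonoOn_of_deriv_pos (convex_Icc a b) (hf.continuousOn.mono hsub)
    intro x hx
    rw [interior_Icc] at hx
    exact (hIoc ⟨hx.1, le_of_lt hx.2⟩).1
  have h1 : f a < f b := hmono (left_mem_Icc.2 hab.le) (right_mem_Icc.2 hab.le) hab
  have h2 : f b ≤ f a := (hIoc ⟨hab, le_rfl⟩).2.1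
  linarith

/-- Weak maximum principle for strict subsolutions on a rectangle. -/
lemma rect_max {v : ℝ × ℝ → ℝ} {R : ℝ} (hR : 0 < R)
    (hc : ContinuousOn v (Icc (-R) R ×ˢ Icc (0:ℝ) 1))
    (hcd : ContDiffOn ℝ 2 v ((univ : Set ℝ) ×ˢ Ioo (0:ℝ) 1))
    (hsub : ∀ p : ℝ × ℝ, p.2 ∈ Ioo (0:ℝ) 1 → 0 < pdx (pdx v) p + pdy (pdy v) p)
    {b : ℝ}
    (hbdry : ∀ p ∈ Icc (-R) R ×ˢ Icc (0:ℝ) 1,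
      (p.1 = -R ∨ p.1 = R ∨ p.2 = 0 ∨ p.2 = 1) → v p ≤ b) :
    ∀ p ∈ Icc (-R) R ×ˢ Icc (0:ℝ) 1, v p ≤ b := by
  set K : Set (ℝ × ℝ) := Icc (-R) R ×ˢ Icc (0:ℝ) 1 with hK
  have hKc : IsCompact K := (isCompact_Icc).prod isCompact_Icc
  have hKne : K.Nonempty := ⟨(0, 0), by simp only [hK, mem_prod, mem_Icc]; norm_num; linarith⟩
  obtain ⟨p0, hp0K, hp0max⟩ := hKc.exists_isMaxOn hKne hc
  suffices h : v p0 ≤ b by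
    intro p hp; exact le_trans (hp0max hp) h
  by_cases hside : p0.1 = -R ∨ p0.1 = R ∨ p0.2 = 0 ∨ p0.2 = 1
  · exact hbdry p0 hp0K hside
  push_neg at hside
  obtain ⟨h1, h2, h3, h4⟩ := hside
  have hx : p0.1 ∈ Ioo (-R) R := ⟨lt_of_le_of_ne hp0K.1.1 (Ne.symm h1), lt_of_le_of_ne hp0K.1.2 h2⟩
  have hy : p0.2 ∈ Ioo (0:ℝ) 1 := ⟨lt_of_le_of_ne hp0K.2.1 (Ne.symm h3), lt_of_le_of_ne hp0K.2.2 h4⟩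
  exfalso
  -- horizontal second derivative ≤ 0
  have hh : pdx (pdx v) p0 ≤ 0 := by
    have hmax : IsLocalMax (fun x => v (x, p0.2)) p0.1 := by
      filter_upwards [Ioo_mem_nhds hx.1 hx.2] with x hxx
      exact hp0max ⟨⟨hxx.1.le, hxx.2.le⟩, hp0K.2⟩
    have := sd_test isOpen_univ (slice_h hcd hy).contDiffOn (mem_univ p0.1) hmax
    exact this
  have hv : pdy (pdy v) p0 ≤ 0 := by
    have hmax : IsLocalMax (fun y => v (p0.1, y)) p0.2 := by
      filter_upwards [Ioo_mem_nhds hy.1 hy.2] with y hyy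
      exact hp0max ⟨hp0K.1, ⟨hyy.1.le, hyy.2.le⟩⟩
    exact sd_test isOpen_Ioo (slice_v hcd p0.1) hy hmax
  have := hsub p0 hy
  linarith

/-- Comparison with the supersolution `B·η`. -/
lemma comparison {w : ℝ × ℝ → ℝ}
    (hcont : ContinuousOn w (univ ×ˢ Icc (0 : ℝ) 1))
    (hharm : HarmonicOnR2 w (univ ×ˢ Ioo (0 : ℝ) 1))
    (hbed : ∀ ξ : ℝ, w (ξ, 0) = 0)
    (hdecay : ∀ ε > 0, ∃ R : ℝ, ∀ p : ℝ × ℝ, R ≤ |p.1| → p.2 ∈ Icc (0 : ℝ) 1 → |w p| < ε)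
    {B : ℝ} (hB : 0 ≤ B) (htopb : ∀ ξ : ℝ, w (ξ, 1) ≤ B) :
    ∀ p : ℝ × ℝ, p.2 ∈ Icc (0:ℝ) 1 → w p ≤ B * p.2 := by
  intro p0 hp0
  refine le_of_forall_pos_le_add (fun ε hε => ?_)
  set δ := ε / 2 with hδdef
  have hδ : 0 < δ := by positivity
  obtain ⟨R0, hR0⟩ := hdecay δ hδ
  set R := max R0 (|p0.1| + 1) with hRdef
  have hRpos : 0 < R := lt_of_lt_of_le (by positivity) (le_max_right _ _)
  have hR0le : R0 ≤ R := le_max_left _ _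
  have hp01 : |p0.1| ≤ R := le_trans (by linarith [le_max_right R0 (|p0.1| + 1)]) le_rfl
  set c := δ / R ^ 2 with hcdef
  have hc : 0 < c := by positivity
  set v : ℝ × ℝ → ℝ := fun p => w p - B * p.2 + c * (p.1 ^ 2 - R ^ 2) with hvdef
  -- continuity on the rectangle
  have hvc : ContinuousOn v (Icc (-R) R ×ˢ Icc (0:ℝ) 1) := by
    apply ContinuousOn.add
    · exact (hcont.mono (fun q hq => ⟨mem_univ _, hq.2⟩)).sub
        (continuous_const.mul continuous_snd).continuousOn
    · exact ((continuous_const.mul ((continuous_fst.pow 2).sub continuous_const))).continuousOn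
  -- C² on the strip
  have hq2 : ContDiff ℝ 2 (fun p : ℝ × ℝ => -(B * p.2) + c * (p.1 ^ 2 - R ^ 2)) := by
    apply ContDiff.add
    · exact (contDiff_const.mul contDiff_snd).neg
    · exact contDiff_const.mul ((contDiff_fst.pow 2).sub contDiff_const)
  have hvcd : ContDiffOn ℝ 2 v ((univ : Set ℝ) ×ˢ Ioo (0:ℝ) 1) := by
    have := hharm.1.add hq2.contDiffOn
    refine this.congr (fun q hq => ?_)
    simp [hvdef]; ring
  -- subsolution computation
  have hsub : ∀ p : ℝ × ℝ, p.2 ∈ Ioo (0:ℝ) 1 → 0 < pdx (pdx v) p + pdy (pdy v) p := by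
    intro p hp
    have hslh : ContDiff ℝ 2 (fun x => w (x, p.2)) := slice_h hharm.1 hp
    have hslhd : Differentiable ℝ (fun x => w (x, p.2)) := hslh.differentiable (by norm_num)
    have hslh1 : ContDiff ℝ 1 (deriv (fun x => w (x, p.2))) := by
      have h2 : ContDiff ℝ (1+1) (fun x => w (x, p.2)) := by
        exact_mod_cast hslh
      exact (contDiff_succ_iff_deriv.1 h2).2.2
    -- first derivative of the horizontal slice of v
    have hstep1 : ∀ x : ℝ, pdx v (x, p.2) = pdx w (x, p.2) + c * (2 * x) := by
      intro x
      have hw' : HasDerivAt (fun x' => w (x', p.2)) (pdx w (x, p.2)) x :=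
        (hslhd x).hasDerivAt
      have hpoly : HasDerivAt (fun x' : ℝ => c * (x' ^ 2 - R ^ 2)) (c * (2 * x)) x := by
        have := ((hasDerivAt_pow 2 x).sub_const (R ^ 2)).const_mul c
        simpa using this
      have : HasDerivAt (fun x' => w (x', p.2) - B * p.2 + c * (x' ^ 2 - R ^ 2))
          (pdx w (x, p.2) + c * (2 * x)) x := (hw'.sub_const (B * p.2)).add hpoly
      exact this.deriv
    have hxx : pdx (pdx v) p = pdx (pdx w) p + c * 2 := by
      have heq : (fun x => pdx v (x, p.2)) = fun x => pdx w (x, p.2) + c * (2 * x) :=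
        funext hstep1
      have hw2 : HasDerivAt (fun x => pdx w (x, p.2)) (pdx (pdx w) p) p.1 := by
        have hd : DifferentiableAt ℝ (deriv (fun x => w (x, p.2))) p.1 :=
          (hslh1.differentiable one_ne_zero) p.1
        exact hd.hasDerivAt
      have : HasDerivAt (fun x => pdx w (x, p.2) + c * (2 * x))
          (pdx (pdx w) p + c * 2) p.1 := by
        refine hw2.add ?_
        have := ((hasDerivAt_id p.1).const_mul 2).const_mul c
        simpa [mul_assoc] using this
      calc pdx (pdx v) p = deriv (fun x => pdx v (x, p.2)) p.1 := rfl
        _ = deriv (fun x => pdx w (x, p.2) + c * (2 * x)) p.1 := by rw [heq]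
        _ = pdx (pdx w) p + c * 2 := this.deriv
    have hyy : pdy (pdy v) p = pdy (pdy w) p := by
      have hslv : ContDiffOn ℝ 2 (fun y => w (p.1, y)) (Ioo (0:ℝ) 1) := slice_v hharm.1 p.1
      have hslv1 : ContDiffOn ℝ 1 (deriv (fun y => w (p.1, y))) (Ioo (0:ℝ) 1) :=
        hslv.deriv_of_isOpen isOpen_Ioo (by norm_num)
      -- pdy v agrees with pdy w - B near p.2
      have hstep1 : ∀ y ∈ Ioo (0:ℝ) 1, pdy v (p.1, y) = pdy w (p.1, y) - B := by
        intro y hy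
        have hwd : DifferentiableAt ℝ (fun y' => w (p.1, y')) y :=
          (hslv.contDiffAt (isOpen_Ioo.mem_nhds hy)).differentiableAt (by norm_num)
        have hw' : HasDerivAt (fun y' => w (p.1, y')) (pdy w (p.1, y)) y := hwd.hasDerivAt
        have : HasDerivAt (fun y' => w (p.1, y') - B * y' + c * (p.1 ^ 2 - R ^ 2))
            (pdy w (p.1, y) - B) y := by
          have hb : HasDerivAt (fun y' : ℝ => B * y') B y := by
            simpa using (hasDerivAt_id y).const_mul B
          simpa using (hw'.sub hb).add_const (c * (p.1 ^ 2 - R ^ 2))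
        exact this.deriv
      have heq : (fun y => pdy v (p.1, y)) =ᶠ[𝓝 p.2] fun y => pdy w (p.1, y) - B := by
        filter_upwards [Ioo_mem_nhds hp.1 hp.2] with y hy using hstep1 y hy
      have hw2 : HasDerivAt (fun y => pdy w (p.1, y)) (pdy (pdy w) p) p.2 := by
        have hd : DifferentiableAt ℝ (deriv (fun y => w (p.1, y))) p.2 :=
          (hslv1.contDiffAt (isOpen_Ioo.mem_nhds hp)).differentiableAt one_ne_zero
        exact hd.hasDerivAt
      calc pdy (pdy v) p = deriv (fun y => pdy v (p.1, y)) p.2 := rfl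
        _ = deriv (fun y => pdy w (p.1, y) - B) p.2 := heq.deriv_eq
        _ = pdy (pdy w) p := (hw2.sub_const B).deriv
    have hharm2 := hharm.2 p ⟨mem_univ _, hp⟩
    rw [hxx, hyy]
    linarith
  -- boundary bound
  have hbdry : ∀ p ∈ Icc (-R) R ×ˢ Icc (0:ℝ) 1,
      (p.1 = -R ∨ p.1 = R ∨ p.2 = 0 ∨ p.2 = 1) → v p ≤ δ := by
    intro p hp hside
    have hsq : p.1 ^ 2 ≤ R ^ 2 := sq_le_sq' hp.1.1 hp.1.2
    have hwp : w p = w (p.1, p.2) := by rw [Prod.mk.eta]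
    have hv0 : v p = w p - B * p.2 + c * (p.1 ^ 2 - R ^ 2) := rfl
    have hB2 : 0 ≤ B * p.2 := mul_nonneg hB hp.2.1
    rcases hside with h | h | h | h
    · have hRabs : R ≤ |p.1| := by rw [h, abs_neg, abs_of_pos hRpos]
      have habs := abs_lt.1 (hR0 p (hR0le.trans hRabs) hp.2)
      have hsq2 : p.1 ^ 2 = R ^ 2 := by rw [h]; ring
      rw [hv0, hsq2]
      simp only [sub_self, mul_zero]
      linarith [habs.2]
    · have hRabs : R ≤ |p.1| := by rw [h, abs_of_pos hRpos]
      have habs := abs_lt.1 (hR0 p (hR0le.trans hRabs) hp.2)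
      have hsq2 : p.1 ^ 2 = R ^ 2 := by rw [h]
      rw [hv0, hsq2]
      simp only [sub_self, mul_zero]
      linarith [habs.2]
    · have hw0 : w p = 0 := by rw [hwp, h]; exact hbed p.1
      rw [hv0, hw0, h]
      nlinarith
    · have hw1 : w p ≤ B := by rw [hwp, h]; exact htopb p.1
      rw [hv0, h]
      nlinarith
  have hp0mem : p0 ∈ Icc (-R) R ×ˢ Icc (0:ℝ) 1 := ⟨abs_le.1 hp01, hp0⟩
  have hfin := rect_max hRpos hvc hvcd hsub hbdry p0 hp0mem
  have hcR : c * (p0.1 ^ 2 - R ^ 2) ≥ -δ := by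
    have h1 : c * R ^ 2 = δ := by
      rw [hcdef]; field_simp
    nlinarith [sq_nonneg p0.1]
  have : w p0 - B * p0.2 + c * (p0.1 ^ 2 - R ^ 2) ≤ δ := hfin
  have : w p0 ≤ B * p0.2 + δ + δ := by linarith
  linarith [this]

lemma one_sided (F : ℝ) (hF : 1 < F ^ 2)
    (w : ℝ × ℝ → ℝ)
    (hcont : ContinuousOn w (univ ×ˢ Icc (0 : ℝ) 1))
    (hbdd : ∃ C : ℝ, ∀ p ∈ univ ×ˢ Icc (0 : ℝ) 1, |w p| ≤ C)
    (hharm : HarmonicOnR2 w (univ ×ˢ Ioo (0 : ℝ) 1))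
    (g : ℝ × ℝ → ℝ)
    (hg : ContinuousOn g (univ ×ˢ Ioc (0 : ℝ) 1))
    (hge : ∀ p : ℝ × ℝ, p.2 ∈ Ioo (0 : ℝ) 1 → g p = pdy w p)
    (hbed : ∀ ξ : ℝ, w (ξ, 0) = 0)
    (htop : ∀ ξ : ℝ, g (ξ, 1) = w (ξ, 1) / F ^ 2)
    (hdecay : ∀ ε > 0, ∃ R : ℝ, ∀ p : ℝ × ℝ, R ≤ |p.1| → p.2 ∈ Icc (0 : ℝ) 1 → |w p| < ε) :
    ∀ p : ℝ × ℝ, p.2 ∈ Icc (0 : ℝ) 1 → w p ≤ 0 := by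
  set D : Set (ℝ × ℝ) := univ ×ˢ Icc (0:ℝ) 1 with hD
  obtain ⟨C, hC⟩ := hbdd
  have hne : (w '' D).Nonempty := ⟨w (0, 0), mem_image_of_mem _ ⟨mem_univ _, le_rfl, zero_le_one⟩⟩
  have hba : BddAbove (w '' D) := ⟨C, fun y ⟨q, hq, hqe⟩ => hqe ▸ (abs_le.1 (hC q hq)).2⟩
  set M := sSup (w '' D) with hM
  have hle : ∀ p ∈ D, w p ≤ M := fun p hp => le_csSup hba (mem_image_of_mem _ hp)
  by_cases hM0 : M ≤ 0
  · intro p hp; exact (hle p ⟨mem_univ _, hp⟩).trans hM0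
  push_neg at hM0
  exfalso
  -- find a max point
  obtain ⟨R0, hR0⟩ := hdecay (M / 2) (by linarith)
  set R := max R0 1 with hR
  have hR1 : (1:ℝ) ≤ R := le_max_right _ _
  have hRpos : (0:ℝ) < R := by linarith
  set K : Set (ℝ × ℝ) := Icc (-R) R ×ˢ Icc (0:ℝ) 1 with hK
  have hKc : IsCompact K := isCompact_Icc.prod isCompact_Icc
  have hKne : K.Nonempty := ⟨(0, 0), by simp only [hK, mem_prod, mem_Icc]; norm_num; linarith⟩
  have hKD : K ⊆ D := fun q hq => ⟨mem_univ _, hq.2⟩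
  obtain ⟨p0, hp0K, hp0max⟩ := hKc.exists_isMaxOn hKne (hcont.mono hKD)
  -- w p0 = M
  have hwp0 : w p0 = M := by
    refine le_antisymm (hle p0 (hKD hp0K)) ?_
    have h1 : M ≤ max (w p0) (M / 2) := by
      refine csSup_le hne ?_
      rintro y ⟨q, hq, rfl⟩
      by_cases hq1 : |q.1| ≤ R
      · exact le_max_of_le_left (hp0max ⟨abs_le.1 hq1, hq.2⟩)
      · push_neg at hq1
        have := hR0 q ((le_max_left R0 1).trans hq1.le) hq.2
        exact le_max_of_le_right (abs_lt.1 this).2.le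
    rcases max_cases (w p0) (M / 2) with ⟨he, _⟩ | ⟨he, _⟩
    · rwa [he] at h1
    · rw [he] at h1; linarith
  -- w ≤ M η
  have hcomp : ∀ p : ℝ × ℝ, p.2 ∈ Icc (0:ℝ) 1 → w p ≤ M * p.2 :=
    comparison hcont hharm hbed hdecay hM0.le
      (fun ξ => hle (ξ, 1) ⟨mem_univ _, zero_le_one, le_rfl⟩)
  -- the max point is at the top
  have hp02 : p0.2 = 1 := by
    have h1 : M ≤ M * p0.2 := hwp0 ▸ hcomp p0 hp0K.2
    have h2 : p0.2 ≤ 1 := hp0K.2.2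
    nlinarith
  set ξ0 := p0.1 with hξ0
  have hw1 : w (ξ0, 1) = M := by
    rw [← hwp0, ← hp02, hξ0, Prod.mk.eta]
  -- vertical slice facts
  have hslvC : ContinuousOn (fun y => w (ξ0, y)) (Icc (0:ℝ) 1) := by
    apply hcont.comp (Continuous.continuousOn (by fun_prop))
    intro y hy; exact ⟨mem_univ _, hy⟩
  have hslvD : DifferentiableOn ℝ (fun y => w (ξ0, y)) (Ioo (0:ℝ) 1) :=
    (slice_v hharm.1 ξ0).differentiableOn (by norm_num)
  -- MVT claim
  have hmvt : ∀ y ∈ Ioo (0:ℝ) 1, ∃ ct ∈ Ioo y 1, M ≤ g (ξ0, ct) := by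
    intro y hy
    obtain ⟨ct, hct, hslope⟩ := exists_deriv_eq_slope (fun y => w (ξ0, y)) hy.2
      (hslvC.mono (Icc_subset_Icc hy.1.le le_rfl))
      (hslvD.mono (Ioo_subset_Ioo hy.1.le le_rfl))
    refine ⟨ct, hct, ?_⟩
    have hct01 : ct ∈ Ioo (0:ℝ) 1 := ⟨hy.1.trans hct.1, hct.2⟩
    have hgc : g (ξ0, ct) = deriv (fun y => w (ξ0, y)) ct := hge (ξ0, ct) hct01
    rw [hgc, hslope, hw1]
    have hwy : w (ξ0, y) ≤ M * y := hcomp (ξ0, y) ⟨hy.1.le, hy.2.le⟩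
    rw [le_div_iff₀ (sub_pos.2 hy.2)]
    nlinarith [hy.1, hy.2]
  -- pass to the limit
  have hgcont : ContinuousWithinAt (fun t => g (ξ0, t)) (Ioc (0:ℝ) 1) 1 := by
    have h1 : ContinuousWithinAt g (univ ×ˢ Ioc (0:ℝ) 1) (ξ0, 1) :=
      hg (ξ0, 1) ⟨mem_univ _, by norm_num, le_rfl⟩
    refine h1.comp (Continuous.continuousWithinAt (by fun_prop)) ?_
    intro t ht; exact ⟨mem_univ _, ht⟩
  have htend : Tendsto (fun t => g (ξ0, t)) (𝓝[<] (1:ℝ)) (𝓝 (g (ξ0, 1))) := by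
    have h1 : Tendsto (fun t => g (ξ0, t)) (𝓝[Ioo (0:ℝ) 1] 1) (𝓝 (g (ξ0, 1))) :=
      hgcont.tendsto.mono_left (nhdsWithin_mono _ Ioo_subset_Ioc_self)
    rwa [nhdsWithin_Ioo_eq_nhdsLT (by norm_num : (0:ℝ) < 1)] at h1
  have hfreq : ∃ᶠ t in 𝓝[<] (1:ℝ), M ≤ g (ξ0, t) := by
    rw [frequently_iff]
    intro U hU
    obtain ⟨l, hl, hIoo⟩ := mem_nhdsLT_iff_exists_Ioo_subset' (show (0:ℝ) < 1 by norm_num) |>.1 hU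
    set y := max l (1/2) with hy
    have hy01 : y ∈ Ioo (0:ℝ) 1 := ⟨lt_of_lt_of_le (by norm_num) (le_max_right _ _),
      max_lt hl (by norm_num)⟩
    obtain ⟨ct, hct, hMg⟩ := hmvt y hy01
    exact ⟨ct, hIoo ⟨lt_of_le_of_lt (le_max_left _ _) hct.1, hct.2⟩, hMg⟩
  have hlim : M ≤ g (ξ0, 1) := by
    by_contra hlt
    push_neg at hlt
    have hev : ∀ᶠ z in 𝓝 (g (ξ0, 1)), z < M := Filter.Tendsto.eventually_lt_const hlt tendsto_id
    have := (htend.frequently hfreq).and_eventually hev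
    obtain ⟨z, hz1, hz2⟩ := this.exists
    linarith
  rw [htop ξ0, hw1] at hlim
  have : M / F ^ 2 < M := by
    rw [div_lt_iff₀ (by linarith : (0:ℝ) < F ^ 2)]
    nlinarith
  linarith

lemma pdx_neg (w : ℝ × ℝ → ℝ) : pdx (fun q => -w q) = fun p => -pdx w p :=
  funext fun p => deriv.neg

lemma pdy_neg (w : ℝ × ℝ → ℝ) : pdy (fun q => -w q) = fun p => -pdy w p :=
  funext fun p => deriv.neg

lemma harm_neg {w : ℝ × ℝ → ℝ} (h : HarmonicOnR2 w (univ ×ˢ Ioo (0:ℝ) 1)) :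
    HarmonicOnR2 (fun q => -w q) (univ ×ˢ Ioo (0:ℝ) 1) := by
  refine ⟨h.1.neg, fun p hp => ?_⟩
  have h2 := h.2 p hp
  rw [pdx_neg w, pdy_neg w, pdx_neg (pdx w), pdy_neg (pdy w)]
  simp only [Pi.neg_def] at *
  linarith

theorem statement4 (F : ℝ) (hF0 : 0 < F) (hF : 1 < F ^ 2)
    (w : ℝ × ℝ → ℝ)
    (hcont : ContinuousOn w (univ ×ˢ Icc (0 : ℝ) 1))
    (hbdd : ∃ C : ℝ, ∀ p ∈ univ ×ˢ Icc (0 : ℝ) 1, |w p| ≤ C)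
    (hharm : HarmonicOnR2 w (univ ×ˢ Ioo (0 : ℝ) 1))
    -- `∂_η w` extends continuously to the top boundary, with extension `g`
    (g : ℝ × ℝ → ℝ)
    (hg : ContinuousOn g (univ ×ˢ Ioc (0 : ℝ) 1))
    (hge : ∀ p : ℝ × ℝ, p.2 ∈ Ioo (0 : ℝ) 1 → g p = pdy w p)
    -- boundary conditions
    (hbed : ∀ ξ : ℝ, w (ξ, 0) = 0)
    (htop : ∀ ξ : ℝ, g (ξ, 1) = w (ξ, 1) / F ^ 2)
    -- decay as `|ξ| → ∞`, uniformly in `η`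
    (hdecay : ∀ ε > 0, ∃ R : ℝ, ∀ p : ℝ × ℝ, R ≤ |p.1| → p.2 ∈ Icc (0 : ℝ) 1 → |w p| < ε) :
    ∀ p : ℝ × ℝ, p.2 ∈ Icc (0 : ℝ) 1 → w p = 0 := by
  have h1 := one_sided F hF w hcont hbdd hharm g hg hge hbed htop hdecay
  obtain ⟨C, hC⟩ := hbdd
  have h2 := one_sided F hF (fun q => -w q) hcont.neg
    ⟨C, fun p hp => by simpa using hC p hp⟩ (harm_neg hharm) (fun q => -g q) hg.neg
    (fun p hp => by rw [pdy_neg]; simp only [Pi.neg_def]; rw [hge p hp])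
    (fun ξ => by simp [hbed ξ])
    (fun ξ => by show -g (ξ, 1) = -w (ξ, 1) / F ^ 2; rw [htop ξ]; ring)
    (fun ε hε => by
      obtain ⟨R, hR⟩ := hdecay ε hε
      exact ⟨R, fun p hp1 hp2 => by simpa using hR p hp1 hp2⟩)
  intro p hp
  have ha := h1 p hp
  have hb := h2 p hp
  simp only [neg_nonpos] at hb
  linarith
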